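/- Fix an integer d ≥ 4 and let I ⊆ ℚ[c₁,c₂,c₃] be the ideal generated by s₀ = −2d(d−1)(d−2)(d−3)c₂ + 2d(d−1)²(d−2)c₁², s₁ = −2d(d−3)(d²−3d+3)c₃ + 2d(d−1)(2d²−8d+7)c₁c₂ − 2d(d−1)²(d−2)c₁³, and s₂ = 2d(2d³−10d²+16d−9)c₁c₃ + 2d(d−1)²(d−2)c₁⁴ + 2d(d−1)(d−2)(d−3)c₂² − 2d(d−1)(3d²−11d+9)c₁²c₂. Then the quotient ring ℚ[c₁,c₂,c₃]/I is isomorphic to ℚ[X]/(X⁴). -/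

import Mathlib

noncomputable section

abbrev R3 : Type := MvPolynomial (Fin 3) ℚ

noncomputable def cc (i : Fin 3) : R3 := MvPolynomial.X i

noncomputable def s0 (d : ℕ) : R3 :=
  -2 * (d : R3) * ((d : R3) - 1) * ((d : R3) - 2) * ((d : R3) - 3) * cc 1
    + 2 * (d : R3) * ((d : R3) - 1) ^ 2 * ((d : R3) - 2) * cc 0 ^ 2

noncomputable def s1 (d : ℕ) : R3 :=
  -2 * (d : R3) * ((d : R3) - 3) * ((d : R3) ^ 2 - 3 * (d : R3) + 3) * cc 2
    + 2 * (d : R3) * ((d : R3) - 1) * (2 * (d : R3) ^ 2 - 8 * (d : R3) + 7) * (cc 0 * cc 1)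
    - 2 * (d : R3) * ((d : R3) - 1) ^ 2 * ((d : R3) - 2) * cc 0 ^ 3

noncomputable def s2 (d : ℕ) : R3 :=
  2 * (d : R3) * (2 * (d : R3) ^ 3 - 10 * (d : R3) ^ 2 + 16 * (d : R3) - 9) * (cc 0 * cc 2)
    + 2 * (d : R3) * ((d : R3) - 1) ^ 2 * ((d : R3) - 2) * cc 0 ^ 4
    + 2 * (d : R3) * ((d : R3) - 1) * ((d : R3) - 2) * ((d : R3) - 3) * cc 1 ^ 2
    - 2 * (d : R3) * ((d : R3) - 1) * (3 * (d : R3) ^ 2 - 11 * (d : R3) + 9) * (cc 0 ^ 2 * cc 1)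

noncomputable def Irel (d : ℕ) : Ideal R3 := Ideal.span {s0 d, s1 d, s2 d}

set_option maxHeartbeats 1000000 in
theorem stmt_8 (d : ℕ) (hd : 4 ≤ d) :
    Nonempty ((R3 ⧸ Irel d) ≃+*
      (Polynomial ℚ ⧸ Ideal.span {(Polynomial.X ^ 4 : Polynomial ℚ)})) := by
  set q : ℚ := (d : ℚ) with hq
  have hq4 : (4:ℚ) ≤ q := by rw [hq]; exact_mod_cast hd
  have h0 : q ≠ 0 := by intro h; nlinarith
  have h1 : q - 1 ≠ 0 := by intro h; nlinarith
  have h2 : q - 2 ≠ 0 := by intro h; nlinarith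
  have h3 : q - 3 ≠ 0 := by intro h; nlinarith
  have h33 : q^2 - 3*q + 3 ≠ 0 := by intro h; nlinarith
  have h31 : q^2 - 3*q + 1 ≠ 0 := by intro h; nlinarith
  have h33' : q*(q-3) + 3 ≠ 0 := by intro h; nlinarith
  have h31' : q*(q-3) + 1 ≠ 0 := by intro h; nlinarith
  -- scalars
  set a : ℚ := (q-1)/(q-3) with ha
  set b : ℚ := (q-1)^2*(q^2-3*q+1)/((q-3)^2*(q^2-3*q+3)) with hb
  set lam : ℚ := 2*q^2*(q-1)^2*(q-2)^2*(q^2-3*q+1)/((q-3)^2*(q^2-3*q+3)) with hlam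
  -- membership helper
  have memI : ∀ u v w : R3, u * s0 d + v * s1 d + w * s2 d ∈ Irel d := by
    intro u v w
    refine add_mem (add_mem ?_ ?_) ?_ <;>
      refine Ideal.mul_mem_left _ _ (Ideal.subset_span ?_) <;> simp
  have mem0 : cc 1 - MvPolynomial.C a * cc 0 ^ 2 ∈ Irel d := by
    have hid : cc 1 - MvPolynomial.C a * cc 0 ^ 2
        = MvPolynomial.C (-(1/(2*q*(q-1)*(q-2)*(q-3)))) * s0 d + 0 * s1 d + 0 * s2 d := by
      apply MvPolynomial.funext; intro x
      simp [s0, s1, s2, cc, ha, hq]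
      rw [← hq]
      field_simp
      ring
    rw [hid]; exact memI _ _ _
  have mem1 : cc 2 - MvPolynomial.C b * cc 0 ^ 3 ∈ Irel d := by
    have hid : cc 2 - MvPolynomial.C b * cc 0 ^ 3
        = MvPolynomial.C (-(2*q*(q-1)*(2*q^2-8*q+7))/((2*q*(q-3)*(q^2-3*q+3))*(2*q*(q-1)*(q-2)*(q-3)))) * cc 0 * s0 d
          + MvPolynomial.C (-(1/(2*q*(q-3)*(q^2-3*q+3)))) * s1 d + 0 * s2 d := by
      apply MvPolynomial.funext; intro x
      simp [s0, s1, s2, cc, hb, hq]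
      rw [← hq]
      field_simp
      ring
    rw [hid]; exact memI _ _ _
  have mem2 : (cc 0 : R3) ^ 4 ∈ Irel d := by
    have hid : (cc 0 : R3) ^ 4
        = (MvPolynomial.C ((2*q^4-12*q^3+23*q^2-14*q)/(2*q^2*(q-1)^2*(q-2)^2*(q^2-3*q+1))) * cc 0 ^ 2
            + MvPolynomial.C (((q-3)^2*(q^2-3*q+3))/(2*q^2*(q-1)^2*(q-2)^2*(q^2-3*q+1))) * cc 1) * s0 d
          + (MvPolynomial.C ((2*q^4-16*q^3+46*q^2-57*q+27)/(2*q^2*(q-1)^2*(q-2)^2*(q^2-3*q+1))) * cc 0) * s1 d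
          + MvPolynomial.C (((q-3)^2*(q^2-3*q+3))/(2*q^2*(q-1)^2*(q-2)^2*(q^2-3*q+1))) * s2 d := by
      apply MvPolynomial.funext; intro x
      simp [s0, s1, s2, cc, hq]
      rw [← hq]
      field_simp
      ring
    rw [hid]; exact memI _ _ _
  -- the forward polynomial map
  set φ : R3 →ₐ[ℚ] Polynomial ℚ :=
    MvPolynomial.aeval ![Polynomial.X, Polynomial.C a * Polynomial.X ^ 2,
      Polynomial.C b * Polynomial.X ^ 3] with hφ
  have hphi0 : φ (s0 d) = 0 := by
    apply Polynomial.funext; intro t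
    simp [hφ, s0, cc, hq, ha]
    rw [← hq]
    field_simp
    ring
  have hphi1 : φ (s1 d) = 0 := by
    apply Polynomial.funext; intro t
    simp [hφ, s1, cc, hq, ha, hb]
    rw [← hq]
    field_simp
    ring
  have hphi2 : φ (s2 d) = Polynomial.C lam * Polynomial.X ^ 4 := by
    apply Polynomial.funext; intro t
    simp [hφ, s2, cc, hq, ha, hb, hlam]
    rw [← hq]
    field_simp
    ring
  set J : Ideal (Polynomial ℚ) := Ideal.span {(Polynomial.X ^ 4 : Polynomial ℚ)} with hJ
  have hker : ∀ p ∈ Irel d, ((Ideal.Quotient.mkₐ ℚ J).comp φ) p = 0 := by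
    intro p hp
    have hsub : Irel d ≤ RingHom.ker ((Ideal.Quotient.mkₐ ℚ J).comp φ) := by
      rw [Irel, Ideal.span_le]
      rintro r hr
      simp only [Set.mem_insert_iff, Set.mem_singleton_iff] at hr
      rcases hr with rfl | rfl | rfl <;>
        simp only [SetLike.mem_coe, RingHom.mem_ker, AlgHom.coe_comp, Function.comp_apply,
          hphi0, hphi1, hphi2, map_zero]
      rw [Ideal.Quotient.mkₐ_eq_mk, Ideal.Quotient.eq_zero_iff_mem]
      exact Ideal.mul_mem_left _ _ (Ideal.subset_span rfl)
    exact hsub hp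
  set Φ : (R3 ⧸ Irel d) →ₐ[ℚ] (Polynomial ℚ ⧸ J) :=
    Ideal.Quotient.liftₐ (Irel d) ((Ideal.Quotient.mkₐ ℚ J).comp φ) hker with hΦ
  -- backward map
  set ψ : Polynomial ℚ →ₐ[ℚ] (R3 ⧸ Irel d) :=
    Polynomial.aeval (Ideal.Quotient.mkₐ ℚ (Irel d) (cc 0)) with hψ
  have hker2 : ∀ p ∈ J, ψ p = 0 := by
    intro p hp
    have hsub : J ≤ RingHom.ker ψ := by
      rw [hJ, Ideal.span_le]
      rintro r hr
      simp only [Set.mem_singleton_iff] at hr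
      subst hr
      simp only [SetLike.mem_coe, RingHom.mem_ker]
      rw [hψ, map_pow, Polynomial.aeval_X, Ideal.Quotient.mkₐ_eq_mk, ← map_pow,
        Ideal.Quotient.eq_zero_iff_mem]
      exact mem2
    exact hsub hp
  set Ψ : (Polynomial ℚ ⧸ J) →ₐ[ℚ] (R3 ⧸ Irel d) :=
    Ideal.Quotient.liftₐ J ψ hker2 with hΨ
  have hΦΨ : Φ.comp Ψ = AlgHom.id ℚ _ := by
    apply Ideal.Quotient.algHom_ext
    apply Polynomial.algHom_ext
    simp [hΦ, hΨ, hψ, hφ, cc]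
    erw [Ideal.Quotient.lift_mk]
    simp
    erw [Ideal.Quotient.lift_mk]
    simp
  have hΨΦ : Ψ.comp Φ = AlgHom.id ℚ _ := by
    apply Ideal.Quotient.algHom_ext
    apply MvPolynomial.algHom_ext
    intro i
    fin_cases i
    · simp [hΦ, hΨ, hψ, hφ, cc]
      erw [Ideal.Quotient.lift_mk]
      simp
    · simp [hΦ, hΨ, hψ, hφ, cc]
      erw [Ideal.Quotient.lift_mk]
      simp
      have hmap : (algebraMap ℚ (R3 ⧸ Irel d)) a
          = Ideal.Quotient.mk (Irel d) (MvPolynomial.C a) := rfl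
      rw [hmap, ← map_pow, ← map_mul, Ideal.Quotient.eq]
      simpa [cc, neg_sub] using neg_mem mem0
    · simp [hΦ, hΨ, hψ, hφ, cc]
      erw [Ideal.Quotient.lift_mk]
      simp
      have hmap : (algebraMap ℚ (R3 ⧸ Irel d)) b
          = Ideal.Quotient.mk (Irel d) (MvPolynomial.C b) := rfl
      rw [hmap, ← map_pow, ← map_mul, Ideal.Quotient.eq]
      simpa [cc, neg_sub] using neg_mem mem1
  exact ⟨(AlgEquiv.ofAlgHom Φ Ψ hΦΨ hΨΦ).toRingEquiv⟩
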